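/- If u ∈ C¹(ℝⁿ) and for every unit vector e with e ⊥ e₁ the directional derivative ∂_e u does not change sign in ℝⁿ (i.e., for each such e, either ∂_e u ≥ 0 everywhere or ∂_e u ≤ 0 everywhere), then there exist a function w ∈ C¹(ℝ²) and a unit vector ẽ ⊥ e₁ such that u(x) = w(x₁, x·ẽ) for all x ∈ ℝⁿ, where w is monotone nondecreasing in its second variable. -/

import Mathlib

/- Setting: the double obstacle problem
   Δu = f·χ_{Ω(u)∩{u<ψ}} + Δψ·χ_{Ω(u)∩{u=ψ}},  u ≤ ψ,
   following "Regularity of the free boundary for the double obstacle problem". -/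

open Set Metric MeasureTheory Filter
open scoped RealInnerProductSpace NNReal

noncomputable section

/-- Euclidean space `ℝⁿ`. -/
abbrev E (n : ℕ) := EuclideanSpace ℝ (Fin n)

variable {n : ℕ}

/-- Pointwise Laplacian, via iterated `fderiv` along the coordinate directions
(defined a.e. for `C^{1,1}` functions, junk value elsewhere). -/
def lap (u : E n → ℝ) (x : E n) : ℝ :=
  ∑ i : Fin n, fderiv ℝ (fun y => fderiv ℝ u y (EuclideanSpace.single i 1)) x
    (EuclideanSpace.single i 1)

/-- `Λ(v) = {x ∈ D : v(x) = 0, ∇v(x) = 0}`. -/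
def Lam (D : Set (E n)) (v : E n → ℝ) : Set (E n) :=
  {x ∈ D | v x = 0 ∧ gradient v x = 0}

/-- `Ω(v) = D \ Λ(v)`. -/
def Om (D : Set (E n)) (v : E n → ℝ) : Set (E n) := D \ Lam D v

/-- `Γ(v) = ∂Λ(v) ∩ D`. -/
def Gam (D : Set (E n)) (v : E n → ℝ) : Set (E n) := frontier (Lam D v) ∩ D

/-- `Λ^ψ(u) = {x ∈ D : u(x) = ψ(x)}`. -/
def LamPsi (D : Set (E n)) (u ψ : E n → ℝ) : Set (E n) := {x ∈ D | u x = ψ x}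

/-- `Γ^ψ(u) = ∂Λ^ψ(u) ∩ D`. -/
def GamPsi (D : Set (E n)) (u ψ : E n → ℝ) : Set (E n) := frontier (LamPsi D u ψ) ∩ D

/-- The unit ball `B₁`. -/
def B1 (n : ℕ) : Set (E n) := ball 0 1

/-- The class `P₁(M)`: `f ∈ C^{0,1}(B₁)`, `ψ ∈ C^{1,1}(B₁) ∩ C^{2,1}(closure Ω(ψ))`,
`u ∈ C^{1,1}(B₁)` with `‖D²u‖_{L^∞(B₁)} ≤ M`, `u ≤ ψ` in `B₁`,
`Δu = f·χ_{Ω(u)∩{u<ψ}} + Δψ·χ_{Ω(u)∩{u=ψ}}` a.e. in `B₁`, and `0 ∈ Γ^d(u)`. -/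
structure P1 (n : ℕ) (M : ℝ) (u ψ f : E n → ℝ) : Prop where
  f_lip : ∃ K : ℝ≥0, LipschitzOnWith K f (B1 n)
  psi_c1 : ContDiffOn ℝ 1 ψ (B1 n)
  psi_c11 : ∃ K : ℝ≥0, LipschitzOnWith K (fderiv ℝ ψ) (B1 n)
  psi_c2 : ContDiffOn ℝ 2 ψ (Om (B1 n) ψ)
  psi_c21 : ∃ K : ℝ≥0, LipschitzOnWith K (fderiv ℝ (fderiv ℝ ψ)) (closure (Om (B1 n) ψ))
  u_c1 : ContDiffOn ℝ 1 u (B1 n)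
  u_c11 : LipschitzOnWith (Real.toNNReal M) (fderiv ℝ u) (B1 n)
  u_le : ∀ x ∈ B1 n, u x ≤ ψ x
  u_eq : ∀ᵐ x : E n, x ∈ B1 n →
    lap u x = (Om (B1 n) u ∩ {y | u y < ψ y}).indicator f x
      + (Om (B1 n) u ∩ {y | u y = ψ y}).indicator (lap ψ) x
  zero_mem : (0 : E n) ∈ Gam (B1 n) u ∩ GamPsi (B1 n) u ψ

/-- Minimal diameter: least distance between two parallel hyperplanes whose
enclosed slab contains `A`. -/
def MD (A : Set (E n)) : ℝ :=
  sInf {d : ℝ | 0 ≤ d ∧ ∃ (e : E n) (b : ℝ), ‖e‖ = 1 ∧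
    ∀ x ∈ A, b ≤ ⟪x, e⟫ ∧ ⟪x, e⟫ ≤ b + d}

/-- Thickness `δ_r(v) = MD(Λ(v) ∩ B_r)/r` (centered at the origin). -/
def thick (D : Set (E n)) (v : E n → ℝ) (r : ℝ) : ℝ := MD (Lam D v ∩ ball (0 : E n) r) / r

/-- If `u ∈ C¹(ℝⁿ)` and for every unit vector `e ⊥ e₁` the directional derivative `∂_e u`
does not change sign, then `u(x) = w(x₁, x·ẽ)` for some `w ∈ C¹(ℝ²)` monotone nondecreasing
in its second variable and some unit vector `ẽ ⊥ e₁`. -/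
theorem two_dimensional_reduction (n : ℕ) (u : E (n + 2) → ℝ) (hu : ContDiff ℝ 1 u)
    (hsign : ∀ e : E (n + 2), ‖e‖ = 1 →
      ⟪e, (EuclideanSpace.single 0 1 : E (n + 2))⟫ = 0 →
      (∀ x, 0 ≤ fderiv ℝ u x e) ∨ (∀ x, fderiv ℝ u x e ≤ 0)) :
    ∃ (w : ℝ → ℝ → ℝ) (e : E (n + 2)), ContDiff ℝ 1 (fun p : ℝ × ℝ => w p.1 p.2) ∧
      ‖e‖ = 1 ∧ ⟪e, (EuclideanSpace.single 0 1 : E (n + 2))⟫ = 0 ∧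
      (∀ x, u x = w (x 0) ⟪x, e⟫) ∧ ∀ s : ℝ, Monotone (w s) := by
  classical
  have hdiff : Differentiable ℝ u := hu.differentiable one_ne_zero
  obtain ⟨E₁, hE₁def⟩ : ∃ v : E (n + 2), v = EuclideanSpace.single 0 1 := ⟨_, rfl⟩
  have hE₁norm : ‖E₁‖ = 1 := by simp [hE₁def]
  have hxE₁ : ∀ x : E (n + 2), ⟪x, E₁⟫ = x 0 := fun x => by
    simp [hE₁def, EuclideanSpace.inner_single_right]
  rw [← hE₁def]
  rw [← hE₁def] at hsign
  -- auxiliary "horizontal gradient"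
  obtain ⟨g, hgv, hgE₁⟩ : ∃ g : E (n + 2) → E (n + 2),
      (∀ x (v : E (n + 2)), ⟪v, E₁⟫ = 0 → ⟪g x, v⟫ = fderiv ℝ u x v) ∧
      (∀ x, ⟪g x, E₁⟫ = 0) := by
    refine ⟨fun x => (InnerProductSpace.toDual ℝ (E (n + 2))).symm (fderiv ℝ u x)
      - (fderiv ℝ u x E₁) • E₁, ?_, ?_⟩
    · intro x v hv
      have hD : ⟪(InnerProductSpace.toDual ℝ (E (n + 2))).symm (fderiv ℝ u x), v⟫
          = fderiv ℝ u x v := by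
        rw [← InnerProductSpace.toDual_apply_apply, LinearIsometryEquiv.apply_symm_apply]
      rw [inner_sub_left, real_inner_smul_left, hD, real_inner_comm v E₁, hv]
      ring
    · intro x
      have hD : ⟪(InnerProductSpace.toDual ℝ (E (n + 2))).symm (fderiv ℝ u x), E₁⟫
          = fderiv ℝ u x E₁ := by
        rw [← InnerProductSpace.toDual_apply_apply, LinearIsometryEquiv.apply_symm_apply]
      rw [inner_sub_left, real_inner_smul_left, hD, real_inner_self_eq_norm_sq, hE₁norm]
      ring
  -- the key direction
  have key : ∃ e : E (n + 2), ‖e‖ = 1 ∧ ⟪e, E₁⟫ = 0 ∧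
      (∀ x, 0 ≤ fderiv ℝ u x e) ∧
      (∀ x (v : E (n + 2)), ‖v‖ = 1 → ⟪v, E₁⟫ = 0 → ⟪v, e⟫ = 0 →
        fderiv ℝ u x v = 0) := by
    by_cases hall : ∀ x, g x = 0
    · have hse : ⟪(EuclideanSpace.single 1 1 : E (n + 2)), E₁⟫ = 0 := by
        rw [hE₁def]
        simp [EuclideanSpace.inner_single_right, EuclideanSpace.single_apply]
      refine ⟨EuclideanSpace.single 1 1, by simp, hse, ?_, ?_⟩
      · intro x
        have h0 : fderiv ℝ u x (EuclideanSpace.single 1 (1 : ℝ)) = 0 := by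
          rw [← hgv x _ hse, hall x, inner_zero_left]
        rw [h0]
      · intro x v _ hvE _
        rw [← hgv x v hvE, hall x, inner_zero_left]
    · push_neg at hall
      obtain ⟨x₀, hgx₀⟩ := hall
      obtain ⟨r, hrdef⟩ : ∃ r : ℝ, r = ‖g x₀‖ := ⟨_, rfl⟩
      have hr : 0 < r := by rw [hrdef]; exact norm_pos_iff.mpr hgx₀
      obtain ⟨e, hedef⟩ : ∃ e : E (n + 2), e = r⁻¹ • g x₀ := ⟨_, rfl⟩
      have he1 : ‖e‖ = 1 := by
        rw [hedef, norm_smul, Real.norm_eq_abs, abs_of_nonneg (inv_nonneg.mpr hr.le),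
          ← hrdef, inv_mul_cancel₀ hr.ne']
      have heE : ⟪e, E₁⟫ = 0 := by
        rw [hedef, real_inner_smul_left, hgE₁, mul_zero]
      have hge : g x₀ = r • e := by
        rw [hedef, smul_smul, mul_inv_cancel₀ hr.ne', one_smul]
      have hde₀ : fderiv ℝ u x₀ e = r := by
        rw [← hgv x₀ e heE, hedef, real_inner_smul_right, real_inner_self_eq_norm_sq,
          ← hrdef]
        field_simp
      have hpos : ∀ x, 0 ≤ fderiv ℝ u x e := by
        rcases hsign e he1 heE with h | h
        · exact h
        · exfalso
          have := h x₀
          rw [hde₀] at this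
          exact absurd this (not_le.mpr hr)
      refine ⟨e, he1, heE, hpos, ?_⟩
      intro x v hv1 hvE hve
      by_contra hc
      obtain ⟨a, hadef⟩ : ∃ a : ℝ, a = fderiv ℝ u x e := ⟨_, rfl⟩
      obtain ⟨c, hcdef⟩ : ∃ c : ℝ, c = fderiv ℝ u x v := ⟨_, rfl⟩
      have hcne : c ≠ 0 := by rw [hcdef]; exact hc
      have ha : 0 ≤ a := hadef ▸ hpos x
      obtain ⟨t, htdef⟩ : ∃ t : ℝ, t = -(a + 1) / c := ⟨_, rfl⟩
      have hac : a + t * c = -1 := by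
        rw [htdef]
        field_simp
        ring
      have hst : (0 : ℝ) < Real.sqrt (1 + t ^ 2) := by
        apply Real.sqrt_pos.mpr
        positivity
      obtain ⟨s, hsdef⟩ : ∃ s : ℝ, s = (Real.sqrt (1 + t ^ 2))⁻¹ := ⟨_, rfl⟩
      have hs : 0 < s := by rw [hsdef]; exact inv_pos.mpr hst
      obtain ⟨e', he'def⟩ : ∃ e' : E (n + 2), e' = s • (e + t • v) := ⟨_, rfl⟩
      have hev : ⟪e, v⟫ = 0 := by rw [real_inner_comm]; exact hve
      have hnorm : ‖e + t • v‖ = Real.sqrt (1 + t ^ 2) := by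
        have hsq : ‖e + t • v‖ ^ 2 = 1 + t ^ 2 := by
          rw [norm_add_sq_real, he1, real_inner_smul_right, hev, norm_smul, hv1,
            Real.norm_eq_abs, mul_zero, mul_one, mul_zero, sq_abs]
          ring
        rw [← hsq, Real.sqrt_sq (norm_nonneg _)]
      have he'1 : ‖e'‖ = 1 := by
        rw [he'def, norm_smul, hnorm, Real.norm_eq_abs, hsdef,
          abs_of_nonneg (inv_nonneg.mpr hst.le), inv_mul_cancel₀ hst.ne']
      have he'E : ⟪e', E₁⟫ = 0 := by
        rw [he'def, real_inner_smul_left, inner_add_left, heE, real_inner_smul_left, hvE]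
        ring
      have hlin : ∀ x' : E (n + 2),
          fderiv ℝ u x' e' = s * (fderiv ℝ u x' e + t * fderiv ℝ u x' v) := by
        intro x'
        rw [he'def, (fderiv ℝ u x').map_smul, map_add, (fderiv ℝ u x').map_smul,
          smul_eq_mul, smul_eq_mul]
      have hdx : fderiv ℝ u x e' = -s := by
        rw [hlin, ← hadef, ← hcdef, hac]
        ring
      have hdx₀ : fderiv ℝ u x₀ e' = s * r := by
        have hgv₀ : fderiv ℝ u x₀ v = 0 := by
          rw [← hgv x₀ v hvE, hge, real_inner_smul_left, hev, mul_zero]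
        rw [hlin, hde₀, hgv₀]
        ring
      rcases hsign e' he'1 he'E with h | h
      · have := h x
        rw [hdx] at this
        exact absurd this (not_le.mpr (by linarith))
      · have := h x₀
        rw [hdx₀] at this
        nlinarith
  obtain ⟨e, he1, heE, hpos, hperp0⟩ := key
  have hperp : ∀ x (v : E (n + 2)), ⟪v, E₁⟫ = 0 → ⟪v, e⟫ = 0 →
      fderiv ℝ u x v = 0 := by
    intro x v hvE hve
    rcases eq_or_ne v 0 with rfl | hv
    · simp
    · have hvn : (0 : ℝ) < ‖v‖ := norm_pos_iff.mpr hv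
      have h1 : ‖(‖v‖⁻¹ • v : E (n + 2))‖ = 1 := by
        rw [norm_smul, Real.norm_eq_abs, abs_of_nonneg (inv_nonneg.mpr hvn.le),
          inv_mul_cancel₀ hvn.ne']
      have h0 := hperp0 x (‖v‖⁻¹ • v) h1
        (by rw [real_inner_smul_left, hvE, mul_zero])
        (by rw [real_inner_smul_left, hve, mul_zero])
      rw [(fderiv ℝ u x).map_smul, smul_eq_mul] at h0
      rcases mul_eq_zero.mp h0 with h | h
      · exact absurd h (inv_ne_zero hvn.ne')
      · exact h
  -- derivative along lines
  have hline : ∀ (y v : E (n + 2)) (t : ℝ),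
      HasDerivAt (fun t : ℝ => u (y + t • v)) (fderiv ℝ u (y + t • v) v) t := by
    intro y v t
    have h1 : HasDerivAt (fun t : ℝ => y + t • v) v t := by
      simpa using ((hasDerivAt_id t).smul_const v).const_add y
    exact ((hdiff (y + t • v)).hasFDerivAt.comp_hasDerivAt t h1 :)
  refine ⟨fun s t => u (s • E₁ + t • e), e, ?_, he1, heE, ?_, ?_⟩
  · exact hu.comp ((contDiff_fst.smul contDiff_const).add (contDiff_snd.smul contDiff_const))
  · intro x
    obtain ⟨y, hydef⟩ : ∃ y : E (n + 2), y = (x 0) • E₁ + ⟪x, e⟫ • e := ⟨_, rfl⟩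
    obtain ⟨v, hvdef⟩ : ∃ v : E (n + 2), v = x - y := ⟨_, rfl⟩
    have hvE : ⟪v, E₁⟫ = 0 := by
      rw [hvdef, inner_sub_left, hydef, inner_add_left, real_inner_smul_left,
        real_inner_smul_left, real_inner_self_eq_norm_sq, hE₁norm, heE, hxE₁]
      ring
    have hve : ⟪v, e⟫ = 0 := by
      rw [hvdef, inner_sub_left, hydef, inner_add_left, real_inner_smul_left,
        real_inner_smul_left, real_inner_self_eq_norm_sq, he1,
        real_inner_comm e E₁, heE]
      ring
    have hconst : u (y + (1 : ℝ) • v) = u (y + (0 : ℝ) • v) :=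
      is_const_of_deriv_eq_zero (fun t => (hline y v t).differentiableAt)
        (fun t => by rw [(hline y v t).deriv]; exact hperp _ _ hvE hve) 1 0
    have hx : y + (1 : ℝ) • v = x := by rw [hvdef]; simp
    have hy : y + (0 : ℝ) • v = y := by simp
    rw [hx, hy] at hconst
    rw [hconst, hydef]
  · intro s
    apply monotone_of_deriv_nonneg
    · intro t
      exact (hline (s • E₁) e t).differentiableAt
    · intro t
      rw [(hline (s • E₁) e t).deriv]
      exact hpos _
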